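/- arXiv:2603.21568 — 2 statements merged into one kernel-verified Lean document; each statement's English description precedes it below -/
import Mathlib

section
/- Let Ψ ∈ ℝ^{M×N} be a matrix and let P ∈ ℝ^{N×M} be a Moore–Penrose pseudoinverse of Ψ, i.e. ΨPΨ = Ψ, PΨP = P, (ΨP)ᵀ = ΨP and (PΨ)ᵀ = PΨ. Let S ⊆ {1,…,M} be a set of indices and suppose the rows of Ψ indexed by S are linearly independent. Then the principal submatrix of ΨP on the index set S (i.e. the matrix ((ΨP)_{i j})_{i,j ∈ S}) is symmetric positive definite. -/
open Matrix

/-- If `P` is a Moore–Penrose pseudoinverse of `Ψ` and the rows of `Ψ` indexed by the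
finite index set `S` are linearly independent, then the principal submatrix of `Ψ * P`
on `S` is positive definite. -/
theorem submatrix_mul_pseudoinverse_posDef
    {M N : ℕ} (Ψ : Matrix (Fin M) (Fin N) ℝ) (P : Matrix (Fin N) (Fin M) ℝ)
    (h1 : Ψ * P * Ψ = Ψ) (h2 : P * Ψ * P = P)
    (h3 : (Ψ * P)ᵀ = Ψ * P) (h4 : (P * Ψ)ᵀ = P * Ψ)
    (S : Finset (Fin M))
    (hrows : LinearIndependent ℝ (fun i : {i // i ∈ S} => Ψ (i : Fin M))) :
    ((Ψ * P).submatrix (fun i : {i // i ∈ S} => (i : Fin M))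
      (fun j : {j // j ∈ S} => (j : Fin M))).PosDef := by
  have hQsymm : (Ψ * P).IsHermitian := h3
  have hQidem : (Ψ * P) * (Ψ * P) = Ψ * P := by
    rw [← Matrix.mul_assoc, h1]
  have hΨtQ : Ψᵀ * (Ψ * P) = Ψᵀ := by
    calc Ψᵀ * (Ψ * P) = Ψᵀ * (Ψ * P)ᵀ := by rw [h3]
    _ = ((Ψ * P) * Ψ)ᵀ := (Matrix.transpose_mul _ _).symm
    _ = Ψᵀ := by rw [h1]
  rw [Matrix.posDef_iff_dotProduct_mulVec]
  constructor
  · exact hQsymm.submatrix _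
  · intro c hc
    set x : Fin M → ℝ := fun i => if h : i ∈ S then c ⟨i, h⟩ else 0 with hx
    have hext : ∀ (g : Fin M → ℝ), (∀ j ∉ S, g j = 0) →
        ∑ j : {j // j ∈ S}, g (j : Fin M) = ∑ j : Fin M, g j := by
      intro g hg
      rw [Finset.sum_coe_sort S g]
      exact Finset.sum_subset (Finset.subset_univ S) (fun j _ hj => hg j hj)
    have hkey : star c ⬝ᵥ (((Ψ * P).submatrix (fun i : {i // i ∈ S} => (i : Fin M))
        (fun j : {j // j ∈ S} => (j : Fin M))) *ᵥ c) = x ⬝ᵥ ((Ψ * P) *ᵥ x) := by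
      simp only [dotProduct, Matrix.mulVec, dotProduct,
        Matrix.submatrix_apply, star_trivial]
      have inner : ∀ i : Fin M,
          ∑ j : {j // j ∈ S}, (Ψ * P) i (j : Fin M) * c j
            = ∑ j : Fin M, (Ψ * P) i j * x j := by
        intro i
        rw [← hext (fun j => (Ψ * P) i j * x j)
          (by intro j hj; simp [hx, dif_neg hj])]
        exact Finset.sum_congr rfl fun j _ => by simp [hx, dif_pos j.2]
      rw [← hext (fun i => x i * ∑ j : Fin M, (Ψ * P) i j * x j)
        (by intro i hi; simp [hx, dif_neg hi])]
      refine Finset.sum_congr rfl fun i _ => ?_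
      rw [← inner (i : Fin M)]
      simp [hx, dif_pos i.2]
    rw [hkey]
    have hsq : x ⬝ᵥ ((Ψ * P) *ᵥ x) = ((Ψ * P) *ᵥ x) ⬝ᵥ ((Ψ * P) *ᵥ x) := by
      conv_lhs => rw [← hQidem]
      rw [← Matrix.mulVec_mulVec, dotProduct_mulVec, ← Matrix.mulVec_transpose, h3]
    rw [hsq]
    have hQx : (Ψ * P) *ᵥ x ≠ 0 := by
      intro h0
      have hΨx : Ψᵀ *ᵥ x = 0 := by
        calc Ψᵀ *ᵥ x = (Ψᵀ * (Ψ * P)) *ᵥ x := by rw [hΨtQ]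
        _ = Ψᵀ *ᵥ ((Ψ * P) *ᵥ x) := by rw [Matrix.mulVec_mulVec]
        _ = 0 := by rw [h0, Matrix.mulVec_zero]
      have hcomb : ∑ i : {i // i ∈ S}, c i • Ψ (i : Fin M) = 0 := by
        funext j
        rw [Finset.sum_apply, Pi.zero_apply]
        have hth : ∑ i : Fin M, Ψᵀ j i * x i = 0 := by
          have := congrFun hΨx j
          simpa [Matrix.mulVec, dotProduct] using this
        calc ∑ i : {i // i ∈ S}, (c i • Ψ (i : Fin M)) j
            = ∑ i : {i // i ∈ S}, (fun i' : Fin M => Ψᵀ j i' * x i') (i : Fin M) := by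
              refine Finset.sum_congr rfl fun i _ => ?_
              simp only [Pi.smul_apply, smul_eq_mul, Matrix.transpose_apply, hx,
                dif_pos i.2, Subtype.coe_eta]
              ring
          _ = ∑ i : Fin M, Ψᵀ j i * x i := by
              exact hext (fun i' => Ψᵀ j i' * x i')
                (by intro i hi; simp [hx, dif_neg hi])
          _ = 0 := hth
      have := Fintype.linearIndependent_iff.mp hrows c hcomb
      exact hc (funext this)
    have hne : ((Ψ * P) *ᵥ x) ⬝ᵥ ((Ψ * P) *ᵥ x) ≠ 0 := fun h =>
      hQx (dotProduct_self_eq_zero.mp h)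
    have hnn : 0 ≤ ((Ψ * P) *ᵥ x) ⬝ᵥ ((Ψ * P) *ᵥ x) := by
      rw [dotProduct]
      exact Finset.sum_nonneg fun i _ => mul_self_nonneg _
    exact lt_of_le_of_ne hnn (Ne.symm hne)
end

section
/- Let Ψ ∈ ℝ^{M×N} be a matrix, P ∈ ℝ^{N×M} a Moore–Penrose pseudoinverse of Ψ, S ⊆ {1,…,M} a set of 'boundary' indices, and B ∈ ℝ^{M×M} the diagonal matrix with B_{ii} = 0 for i ∈ S and B_{ii} = 1 for i ∉ S. Let J_w ∈ ℝ^{M×N} be a matrix whose submatrix of rows indexed by S equals G·Ψ_S, where Ψ_S is the submatrix of Ψ consisting of the rows indexed by S and G is an invertible matrix of size |S|×|S|. If the rows of Ψ indexed by S are linearly independent, then the only vector φ ∈ ℝ^M satisfying both Bφ = 0 and (J_w P)φ = 0 is φ = 0; in other words, ker B ∩ ker(J_w P) = {0}. -/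
open Matrix

/-- Deterministic core of the almost-sure regularity of the generalized pencil `(J_u, B)`:
if `P` is a Moore–Penrose pseudoinverse of the collocation matrix `Ψ`, `B` is the diagonal
mass matrix vanishing exactly on the boundary index set `S`, the boundary rows of the
weight-space Jacobian `J_w` are `G * Ψ_S` with `G` invertible, and the boundary rows of `Ψ`
are linearly independent, then `ker B ∩ ker (J_w * P) = {0}`. -/
theorem kernel_inter_trivial_of_boundary_rows_linearIndependent
    {M N : ℕ} (Ψ : Matrix (Fin M) (Fin N) ℝ) (P : Matrix (Fin N) (Fin M) ℝ)
    (h1 : Ψ * P * Ψ = Ψ) (h2 : P * Ψ * P = P)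
    (h3 : (Ψ * P)ᵀ = Ψ * P) (h4 : (P * Ψ)ᵀ = P * Ψ)
    (S : Finset (Fin M))
    (B : Matrix (Fin M) (Fin M) ℝ)
    (hB : B = Matrix.diagonal (fun i => if i ∈ S then (0 : ℝ) else 1))
    (Jw : Matrix (Fin M) (Fin N) ℝ)
    (G : Matrix {i // i ∈ S} {i // i ∈ S} ℝ) (hG : IsUnit G)
    (hJw : Jw.submatrix (fun i : {i // i ∈ S} => (i : Fin M)) id =
      G * Ψ.submatrix (fun i : {i // i ∈ S} => (i : Fin M)) id)
    (hrows : LinearIndependent ℝ (fun i : {i // i ∈ S} => Ψ (i : Fin M)))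
    (φ : Fin M → ℝ) (hBφ : B.mulVec φ = 0) (hJφ : (Jw * P).mulVec φ = 0) :
    φ = 0 := by
  -- φ vanishes off S
  have hoff : ∀ i : Fin M, i ∉ S → φ i = 0 := by
    intro i hi
    have := congrFun hBφ i
    simp [hB, Matrix.mulVec_diagonal, hi] at this
    exact this
  -- set w = P φ
  set w := P.mulVec φ with hw
  -- Jw.mulVec w = 0
  have hJw0 : Jw.mulVec w = 0 := by
    rw [hw, Matrix.mulVec_mulVec]; exact hJφ
  -- boundary rows: G.mulVec (Ψ_S w) = 0
  have hGv : G.mulVec (fun i : {i // i ∈ S} => Ψ (i : Fin M) ⬝ᵥ w) = 0 := by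
    funext i
    have h := congrFun hJw0 (i : Fin M)
    have hrow : Jw (i : Fin M) = (G * Ψ.submatrix (fun i : {i // i ∈ S} => (i : Fin M)) id) i := by
      have := congrFun hJw i
      exact this
    have : (G * Ψ.submatrix (fun i : {i // i ∈ S} => (i : Fin M)) id).mulVec w i = 0 := by
      have : Jw.mulVec w (i : Fin M) = (G * Ψ.submatrix (fun i : {i // i ∈ S} => (i : Fin M)) id).mulVec w i := by
        simp only [Matrix.mulVec, hrow]
      rw [← this, h]; rfl
    rw [← Matrix.mulVec_mulVec] at this
    exact this
  -- G invertible ⇒ Ψ_S w = 0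
  have hdetG : IsUnit G.det := (Matrix.isUnit_iff_isUnit_det G).mp hG
  have hSrow : ∀ i : {i // i ∈ S}, Ψ (i : Fin M) ⬝ᵥ w = 0 := by
    intro i
    have : (fun i : {i // i ∈ S} => Ψ (i : Fin M) ⬝ᵥ w) =
        G⁻¹.mulVec (G.mulVec (fun i : {i // i ∈ S} => Ψ (i : Fin M) ⬝ᵥ w)) := by
      rw [Matrix.mulVec_mulVec, Matrix.nonsing_inv_mul G hdetG, Matrix.one_mulVec]
    rw [hGv, Matrix.mulVec_zero] at this
    exact congrFun this i
  -- u := (Ψ P) φ ; show u = 0 via ‖u‖² = φᵀ (ΨP)ᵀ(ΨP) φ = φᵀ ΨP φ = 0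
  have hΨw : Ψ.mulVec w = (Ψ * P).mulVec φ := by
    rw [hw, Matrix.mulVec_mulVec]
  have hdot0 : φ ⬝ᵥ Ψ.mulVec w = 0 := by
    rw [dotProduct]
    apply Finset.sum_eq_zero
    intro i _
    by_cases hi : i ∈ S
    · have := hSrow ⟨i, hi⟩
      simp [Matrix.mulVec, this]
    · simp [hoff i hi]
  have hu0 : (Ψ * P).mulVec φ = 0 := by
    have hidem : (Ψ * P) * (Ψ * P) = Ψ * P := by
      rw [← Matrix.mul_assoc, h1]
    have hAu : (Ψ * P).mulVec ((Ψ * P).mulVec φ) = (Ψ * P).mulVec φ := by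
      rw [Matrix.mulVec_mulVec, hidem]
    have hnorm : ((Ψ * P).mulVec φ) ⬝ᵥ ((Ψ * P).mulVec φ) = 0 := by
      rw [Matrix.dotProduct_mulVec]
      have hv : ((Ψ * P).mulVec φ) ᵥ* (Ψ * P) = (Ψ * P).mulVec φ := by
        rw [← Matrix.mulVec_transpose, h3, hAu]
      rw [hv, dotProduct_comm, ← hΨw, hdot0]
    have := dotProduct_self_eq_zero.mp hnorm
    exact this
  -- φᵀ Ψ = 0
  have hφΨ : Ψᵀ.mulVec φ = 0 := by
    have : Ψᵀ.mulVec φ = (Ψ * P * Ψ)ᵀ.mulVec φ := by rw [h1]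
    rw [this]
    have : (Ψ * P * Ψ)ᵀ = Ψᵀ * (Ψ * P)ᵀ := by
      rw [Matrix.transpose_mul]
    rw [this, ← Matrix.mulVec_mulVec, h3, hu0, Matrix.mulVec_zero]
  -- linear independence gives φ = 0 on S
  have hcoef : ∀ i : {i // i ∈ S}, φ (i : Fin M) = 0 := by
    have hsum : ∑ i : {i // i ∈ S}, φ (i : Fin M) • Ψ (i : Fin M) = 0 := by
      funext j
      have hj := congrFun hφΨ j
      simp only [Matrix.mulVec, dotProduct, Matrix.transpose_apply,
        Pi.zero_apply] at hj
      have : ∑ i : {i // i ∈ S}, φ (i : Fin M) * Ψ (i : Fin M) j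
          = ∑ i : Fin M, Ψ i j * φ i := by
        rw [Finset.sum_coe_sort S (fun i => φ i * Ψ i j),
          ← Finset.sum_subset (Finset.subset_univ S) (fun i _ hi => by simp [hoff i hi])]
        exact Finset.sum_congr rfl fun i _ => mul_comm _ _
      simp only [Finset.sum_apply, Pi.smul_apply, smul_eq_mul, Pi.zero_apply]
      rw [this, hj]
    exact Fintype.linearIndependent_iff.mp hrows (fun i => φ (i : Fin M)) hsum
  funext i
  by_cases hi : i ∈ S
  · exact hcoef ⟨i, hi⟩
  · exact hoff i hi
end
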